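/- Let α, β ∈ ℂ with α ≠ β, write α − β = ρ·e^{iφ} with ρ > 0 and φ ∈ ℝ, let y : ℂ → ℂ be continuous on the segment [α, β], and define U(z) = e^{αz} · ∫_{[α,β]} y(η)·e^{−zη} dη. Then U(−t·e^{−iφ}) → 0 as the real parameter t → +∞. -/

import Mathlib

open Complex intervalIntegral Filter MeasureTheory

/-- with `α − β = ρ·e^{iφ}`, `ρ > 0`, `φ ∈ ℝ`, and `y` continuous on
`[α, β]`, the function `U(z) = e^{αz}·∫_{[α,β]} y(η)e^{−zη} dη` satisfies
`U(−t·e^{−iφ}) → 0` as the real parameter `t → +∞`. -/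
theorem segment_integral_tendsto_zero
    (α β : ℂ) (hαβ : α ≠ β) (ρ φ : ℝ) (hρ : 0 < ρ)
    (hpolar : α - β = (ρ : ℂ) * Complex.exp (Complex.I * (φ : ℂ)))
    (y : ℂ → ℂ) (hy : ContinuousOn y (segment ℝ α β)) :
    Tendsto
      (fun t : ℝ =>
        Complex.exp (α * (-(t : ℂ) * Complex.exp (-(Complex.I * (φ : ℂ))))) *
          ((β - α) * ∫ s in (0:ℝ)..1,
            y (α + (s : ℂ) * (β - α)) *
              Complex.exp (-(-(t : ℂ) * Complex.exp (-(Complex.I * (φ : ℂ)))) *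
                (α + (s : ℂ) * (β - α)))))
      atTop (nhds 0) := by
  set Δ : ℂ := β - α with hΔdef
  set z : ℝ → ℂ := fun t => -(t : ℂ) * Complex.exp (-(Complex.I * (φ : ℂ))) with hzdef
  set g : ℝ → ℂ := fun s => y (α + (s : ℂ) * Δ) with hgdef
  have he : Complex.exp (-(Complex.I * (φ:ℂ))) * Complex.exp (Complex.I * (φ:ℂ)) = 1 := by
    rw [← Complex.exp_add, neg_add_cancel, Complex.exp_zero]
  have hΔ : Δ = -((ρ : ℂ) * Complex.exp (Complex.I * (φ:ℂ))) := by
    rw [hΔdef, ← hpolar]; ring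
  have hz : ∀ t : ℝ, z t * Δ = (t : ℂ) * (ρ : ℂ) := by
    intro t
    rw [hzdef, hΔ]
    linear_combination (t:ℂ) * (ρ:ℂ) * he
  -- continuity of `g` on `[0,1]`
  have hgc : ContinuousOn g (Set.Icc (0:ℝ) 1) := by
    apply hy.comp
    · exact (continuous_const.add (Complex.continuous_ofReal.mul continuous_const)).continuousOn
    · intro s hs
      rw [segment_eq_image']
      exact ⟨s, hs, by simp [Complex.real_smul, hΔdef]⟩
  obtain ⟨C, hC⟩ := isCompact_Icc.exists_bound_of_continuousOn hgc
  have hC0 : 0 ≤ C := le_trans (norm_nonneg _) (hC 0 ⟨le_refl _, zero_le_one⟩)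
  -- pointwise rewriting of the function
  have hpt : ∀ t : ℝ,
      Complex.exp (α * z t) * (Δ * ∫ s in (0:ℝ)..1, g s * Complex.exp (-(z t) * (α + (s:ℂ) * Δ)))
        = Δ * ∫ s in (0:ℝ)..1, g s * Complex.exp ((-(s * t * ρ) : ℝ) : ℂ) := by
    intro t
    rw [mul_left_comm, ← intervalIntegral.integral_const_mul]
    congr 1
    apply intervalIntegral.integral_congr
    intro s _
    show Complex.exp (α * z t) * (g s * Complex.exp (-(z t) * (α + (s:ℂ) * Δ)))
        = g s * Complex.exp ((-(s * t * ρ) : ℝ) : ℂ)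
    rw [mul_left_comm (Complex.exp (α * z t)) (g s), ← Complex.exp_add]
    congr 1
    congr 1
    push_cast
    linear_combination (-(s:ℂ)) * hz t
  -- the main convergence
  have hmain : Tendsto (fun t : ℝ => ∫ s in (0:ℝ)..1, g s * Complex.exp ((-(s * t * ρ) : ℝ) : ℂ))
      atTop (nhds 0) := by
    simp_rw [intervalIntegral.integral_of_le (zero_le_one' ℝ)]
    have h0 : (0 : ℂ) = ∫ _ in Set.Ioc (0:ℝ) 1, (0:ℂ) := by simp
    rw [h0]
    apply MeasureTheory.tendsto_integral_filter_of_dominated_convergence (fun _ => C)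
    · refine Filter.Eventually.of_forall fun t => ?_
      refine ContinuousOn.aestronglyMeasurable ?_ measurableSet_Ioc
      refine (hgc.mono Set.Ioc_subset_Icc_self).mul ?_
      exact (Complex.continuous_exp.comp (Complex.continuous_ofReal.comp
        (by continuity))).continuousOn
    · filter_upwards [eventually_ge_atTop (0:ℝ)] with t ht
      refine (MeasureTheory.ae_restrict_iff' measurableSet_Ioc).2
        (Filter.Eventually.of_forall fun s hs => ?_)
      have h1 : ‖Complex.exp ((-(s * t * ρ) : ℝ) : ℂ)‖ = Real.exp (-(s * t * ρ)) := by
        rw [Complex.norm_exp, Complex.ofReal_re]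
      rw [norm_mul, h1]
      have h2 : Real.exp (-(s * t * ρ)) ≤ 1 := by
        rw [Real.exp_le_one_iff]
        have : 0 ≤ s * t * ρ := mul_nonneg (mul_nonneg hs.1.le ht) hρ.le
        linarith
      calc ‖g s‖ * Real.exp (-(s * t * ρ)) ≤ C * 1 :=
            mul_le_mul (hC s ⟨hs.1.le, hs.2⟩) h2 (Real.exp_nonneg _) hC0
        _ = C := mul_one C
    · exact MeasureTheory.integrableOn_const measure_Ioc_lt_top.ne
    · refine (MeasureTheory.ae_restrict_iff' measurableSet_Ioc).2
        (Filter.Eventually.of_forall fun s hs => ?_)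
      have hsρ : 0 < s * ρ := mul_pos hs.1 hρ
      have hexp : Tendsto (fun t : ℝ => Real.exp (-(s * t * ρ))) atTop (nhds 0) := by
        have h3 : Tendsto (fun t : ℝ => -(s * t * ρ)) atTop atBot := by
          have : Tendsto (fun t : ℝ => (s * ρ) * t) atTop atTop :=
            Filter.Tendsto.const_mul_atTop hsρ tendsto_id
          refine tendsto_neg_atTop_atBot.comp (this.congr fun t => by ring)
        exact Real.tendsto_exp_atBot.comp h3
      have hexpC : Tendsto (fun t : ℝ => Complex.exp ((-(s * t * ρ) : ℝ) : ℂ)) atTop (nhds 0) := by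
        have h4 := ((Complex.continuous_ofReal.tendsto 0).comp hexp).congr
          (fun t => Complex.ofReal_exp _)
        simpa using h4
      simpa using hexpC.const_mul (g s)
  refine Tendsto.congr
    (f₁ := fun t : ℝ => Δ * ∫ s in (0:ℝ)..1, g s * Complex.exp ((-(s * t * ρ) : ℝ) : ℂ))
    (fun t => (hpt t).symm) ?_
  simpa using hmain.const_mul Δ
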